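/- Let X be a compact metric space and f : X → X a continuous map, let A be an attractor, and let A* = {x ∈ X : ω(x) ∩ A = ∅} be its dual repeller. A subset U ⊆ X is an attracting neighborhood with ω(U) = A if and only if U is a neighborhood of A (i.e. A ⊆ int(U)) and cl(U) ∩ A* = ∅. -/

import Mathlib

open Set

/-- The maximal invariant set in `U`: the union of all subsets `S ⊆ U` with `f '' S = S`. -/
def MaxInv {Y : Type*} (f : Y → Y) (U : Set Y) : Set Y :=
  ⋃₀ {S : Set Y | S ⊆ U ∧ f '' S = S}

/-- The maximal forward invariant set in `U`: the union of all subsets `S ⊆ U`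
with `f '' S ⊆ S`. -/
def MaxInvPlus {Y : Type*} (f : Y → Y) (U : Set Y) : Set Y :=
  ⋃₀ {S : Set Y | S ⊆ U ∧ f '' S ⊆ S}

/-- The omega-limit set `ω(U) = ⋂_{n ≥ 0} cl (⋃_{m ≥ n} f^[m] '' U)`. -/
def OmegaLim {Y : Type*} [TopologicalSpace Y] (f : Y → Y) (U : Set Y) : Set Y :=
  ⋂ n : ℕ, closure (⋃ m ≥ n, f^[m] '' U)

/-- The alpha-limit set `α(U) = ⋂_{n ≥ 0} cl (⋃_{m ≥ n} (f^[m]) ⁻¹' U)`. -/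
def AlphaLim {Y : Type*} [TopologicalSpace Y] (f : Y → Y) (U : Set Y) : Set Y :=
  ⋂ n : ℕ, closure (⋃ m ≥ n, f^[m] ⁻¹' U)

/-- A trapping region: a forward invariant set `U` with `f^[n] '' cl U ⊆ int U`
for some `n ≥ 1`. -/
def IsTrappingRegion {Y : Type*} [TopologicalSpace Y] (f : Y → Y) (U : Set Y) : Prop :=
  f '' U ⊆ U ∧ ∃ n : ℕ, 1 ≤ n ∧ f^[n] '' closure U ⊆ interior U

/-- An attractor: `A = Inv(U)` for some trapping region `U`. -/
def IsAttractor {Y : Type*} [TopologicalSpace Y] (f : Y → Y) (A : Set Y) : Prop :=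
  ∃ U : Set Y, IsTrappingRegion f U ∧ A = MaxInv f U

/-- An attracting neighborhood: `ω(U) ⊆ int U`. -/
def IsAttractingNbhd {Y : Type*} [TopologicalSpace Y] (f : Y → Y) (U : Set Y) : Prop :=
  OmegaLim f U ⊆ interior U

/-- A repelling region: a backward invariant set `U` with `(f^[n]) ⁻¹' cl U ⊆ int U`
for some `n ≥ 1`. -/
def IsRepellingRegion {Y : Type*} [TopologicalSpace Y] (f : Y → Y) (U : Set Y) : Prop :=
  f ⁻¹' U ⊆ U ∧ ∃ n : ℕ, 1 ≤ n ∧ f^[n] ⁻¹' closure U ⊆ interior U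

/-- A repeller: `R = Inv⁺(U)` for some repelling region `U`. -/
def IsRepeller {Y : Type*} [TopologicalSpace Y] (f : Y → Y) (R : Set Y) : Prop :=
  ∃ U : Set Y, IsRepellingRegion f U ∧ R = MaxInvPlus f U

/-- A repelling neighborhood: `α(U) ⊆ int U`. -/
def IsRepellingNbhd {Y : Type*} [TopologicalSpace Y] (f : Y → Y) (U : Set Y) : Prop :=
  AlphaLim f U ⊆ interior U

/-- A backward orbit: a sequence `γ : ℕ → Y` with `f (γ (k+1)) = γ k` for all `k`.
A backward orbit through `x` additionally satisfies `γ 0 = x`. -/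
def IsBackwardOrbit {Y : Type*} (f : Y → Y) (γ : ℕ → Y) : Prop :=
  ∀ k : ℕ, f (γ (k + 1)) = γ k

/-- The orbital alpha-limit set `α_o(γ) = ⋂_{n ≥ 0} cl {γ m : m ≥ n}`. -/
def OrbAlpha {Y : Type*} [TopologicalSpace Y] (γ : ℕ → Y) : Set Y :=
  ⋂ n : ℕ, closure (γ '' {m : ℕ | n ≤ m})

/-- The dual repeller of an attractor `A`: `A* = {x : ω(x) ∩ A = ∅}`. -/
def DualRepeller {Y : Type*} [TopologicalSpace Y] (f : Y → Y) (A : Set Y) : Set Y :=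
  {x : Y | OmegaLim f {x} ∩ A = ∅}

/-- The dual attractor of a repeller `R`:
`R* = {x : ∃ backward orbit γ through x with α_o(γ) ∩ R = ∅}`. -/
def DualAttractor {Y : Type*} [TopologicalSpace Y] (f : Y → Y) (R : Set Y) : Set Y :=
  {x : Y | ∃ γ : ℕ → Y, γ 0 = x ∧ IsBackwardOrbit f γ ∧ OrbAlpha γ ∩ R = ∅}
section AuxDyn
open Set
set_option linter.unusedSectionVars false

variable {X : Type*} [MetricSpace X] [CompactSpace X] {f : X → X} {U V W A : Set X}

/-- tail set -/
private def Tl (f : X → X) (U : Set X) (n : ℕ) : Set X := ⋃ m ≥ n, f^[m] '' U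

private lemma Tl_antitone (f : X → X) (U : Set X) {n n' : ℕ} (h : n ≤ n') :
    Tl f U n' ⊆ Tl f U n :=
  iUnion₂_subset fun m hm => subset_iUnion₂ (s := fun m _ => f^[m] '' U) m (h.trans hm)

private lemma omegaLim_eq_iInter_Tl (f : X → X) (U : Set X) :
    OmegaLim f U = ⋂ n : ℕ, closure (Tl f U n) := rfl

private lemma closure_image_subset' {g : X → X} (hg : Continuous g) (S : Set X) :
    closure (g '' S) ⊆ g '' closure S :=
  closure_minimal (image_mono subset_closure)
    (isClosed_closure.isCompact.image hg).isClosed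

private lemma iter_image_subset (h : f '' V ⊆ V) : ∀ k, f^[k] '' V ⊆ V
  | 0 => by simp
  | (k+1) => by
    rw [Function.iterate_succ', image_comp]
    exact (image_mono (iter_image_subset h k)).trans h

private lemma iter_image_eq (h : f '' A = A) : ∀ k, f^[k] '' A = A
  | 0 => by simp
  | (k+1) => by
    rw [Function.iterate_succ', image_comp, iter_image_eq h k, h]

private lemma omegaLim_mono (h : U ⊆ V) : OmegaLim f U ⊆ OmegaLim f V :=
  iInter_mono fun n => closure_mono (iUnion₂_mono fun _ _ => image_mono h)

private lemma omegaLim_closure (hf : Continuous f) :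
    OmegaLim f (closure U) ⊆ OmegaLim f U := by
  refine iInter_mono fun n => ?_
  refine closure_minimal (iUnion₂_subset fun m hm => ?_) isClosed_closure
  refine (image_closure_subset_closure_image (hf.iterate m)).trans (closure_mono ?_)
  exact subset_iUnion₂ (s := fun m _ => f^[m] '' U) m hm

private lemma invSet_subset_omegaLim (hAU : A ⊆ U) (hA : f '' A = A) :
    A ⊆ OmegaLim f U := by
  intro a ha
  refine mem_iInter.2 fun n => subset_closure ?_
  refine mem_iUnion₂.2 ⟨n, le_refl n, ?_⟩
  exact image_mono hAU (by rw [iter_image_eq hA n]; exact ha)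

private lemma omegaLim_nonempty (hU : U.Nonempty) : (OmegaLim f U).Nonempty := by
  rw [omegaLim_eq_iInter_Tl]
  refine IsCompact.nonempty_iInter_of_sequence_nonempty_isCompact_isClosed _
    (fun n => closure_mono (Tl_antitone f U (Nat.le_succ n)))
    (fun n => ?_) isClosed_closure.isCompact (fun n => isClosed_closure)
  obtain ⟨x, hx⟩ := hU
  exact ⟨f^[n] x, subset_closure (mem_iUnion₂.2 ⟨n, le_refl n, mem_image_of_mem _ hx⟩)⟩

private lemma image_Tl_subset (f : X → X) (U : Set X) (n : ℕ) :
    f '' Tl f U n ⊆ Tl f U (n + 1) := by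
  rw [Tl, image_iUnion₂]
  refine iUnion₂_subset fun m hm => ?_
  rw [← image_comp, ← Function.iterate_succ']
  exact subset_iUnion₂ (s := fun m _ => f^[m] '' U) (m + 1) (Nat.succ_le_succ hm)

private lemma Tl_succ_subset_image (f : X → X) (U : Set X) (n : ℕ) :
    Tl f U (n + 1) ⊆ f '' Tl f U n := by
  refine iUnion₂_subset fun m hm => ?_
  obtain ⟨k, rfl⟩ := Nat.exists_eq_add_of_le hm
  rw [show n + 1 + k = (n + k) + 1 by ring, Function.iterate_succ', image_comp]
  exact image_mono (subset_iUnion₂ (s := fun m _ => f^[m] '' U) (n + k) (Nat.le_add_right n k))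

private lemma image_omegaLim_subset (hf : Continuous f) :
    f '' OmegaLim f U ⊆ OmegaLim f U := by
  intro y hy
  refine mem_iInter.2 fun n => ?_
  have h1 : f '' OmegaLim f U ⊆ closure (Tl f U n) := by
    calc f '' OmegaLim f U ⊆ f '' closure (Tl f U n) :=
          image_mono (iInter_subset _ n)
      _ ⊆ closure (f '' Tl f U n) := image_closure_subset_closure_image hf
      _ ⊆ closure (Tl f U (n + 1)) := closure_mono (image_Tl_subset f U n)
      _ ⊆ closure (Tl f U n) := closure_mono (Tl_antitone f U (Nat.le_succ n))
  exact h1 hy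

private lemma subset_image_omegaLim (hf : Continuous f) :
    OmegaLim f U ⊆ f '' OmegaLim f U := by
  intro y hy
  have hyC : ∀ n, y ∈ f '' closure (Tl f U n) := by
    intro n
    have h1 : y ∈ closure (Tl f U (n + 1)) := mem_iInter.1 hy (n + 1)
    have h2 : closure (Tl f U (n + 1)) ⊆ f '' closure (Tl f U n) :=
      (closure_mono (Tl_succ_subset_image f U n)).trans (closure_image_subset' hf _)
    exact h2 h1
  set D : ℕ → Set X := fun n => f ⁻¹' {y} ∩ closure (Tl f U n) with hD
  have hne : (⋂ n, D n).Nonempty := by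
    refine IsCompact.nonempty_iInter_of_sequence_nonempty_isCompact_isClosed _
      (fun n => inter_subset_inter_right _ (closure_mono (Tl_antitone f U (Nat.le_succ n))))
      (fun n => ?_) ?_ (fun n => (isClosed_singleton.preimage hf).inter isClosed_closure)
    · obtain ⟨x, hx, hfx⟩ := hyC n
      exact ⟨x, by simpa [hD] using hfx, hx⟩
    · exact ((isClosed_singleton.preimage hf).inter isClosed_closure).isCompact
  obtain ⟨x, hx⟩ := hne
  have hfx : f x = y := by
    have := mem_iInter.1 hx 0
    simpa [hD] using this.1
  exact ⟨x, mem_iInter.2 fun n => (mem_iInter.1 hx n).2, hfx⟩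

private lemma Tl_add_subset (f : X → X) (V : Set X) (n j : ℕ) :
    Tl f V (n + j) ⊆ f^[n] '' Tl f V j := by
  refine iUnion₂_subset fun m hm => ?_
  obtain ⟨k, rfl⟩ := Nat.exists_eq_add_of_le hm
  rw [show n + j + k = n + (j + k) by ring, Function.iterate_add, image_comp]
  exact image_mono (subset_iUnion₂ (s := fun m _ => f^[m] '' V) (j + k) (Nat.le_add_right j k))

private lemma omegaLim_trapping_subset_interior (hf : Continuous f)
    (htr : IsTrappingRegion f V) : OmegaLim f V ⊆ interior V := by
  obtain ⟨hfwd, n, -, hn⟩ := htr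
  have hTl : closure (Tl f V n) ⊆ closure V :=
    closure_mono (iUnion₂_subset fun m _ => iter_image_subset hfwd m)
  calc OmegaLim f V ⊆ closure (Tl f V (n + n)) := iInter_subset _ _
    _ ⊆ closure (f^[n] '' Tl f V n) := closure_mono (Tl_add_subset f V n n)
    _ ⊆ f^[n] '' closure (Tl f V n) := closure_image_subset' (hf.iterate n) _
    _ ⊆ f^[n] '' closure V := image_mono hTl
    _ ⊆ interior V := hn

private lemma omegaLim_trapping_eq (hf : Continuous f) (htr : IsTrappingRegion f V) :
    OmegaLim f V = MaxInv f V := by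
  have hinv : f '' OmegaLim f V = OmegaLim f V :=
    subset_antisymm (image_omegaLim_subset hf) (subset_image_omegaLim hf)
  have hsub : OmegaLim f V ⊆ V :=
    (omegaLim_trapping_subset_interior hf htr).trans interior_subset
  refine subset_antisymm (subset_sUnion_of_mem ⟨hsub, hinv⟩) ?_
  exact sUnion_subset fun S hS => invSet_subset_omegaLim hS.1 hS.2

private lemma omegaLim_subset_of_iterate (N : ℕ) (hN : f^[N] '' W ⊆ V) :
    OmegaLim f W ⊆ OmegaLim f V := by
  intro y hy
  refine mem_iInter.2 fun n => ?_
  have h1 : y ∈ closure (Tl f W (n + N)) := mem_iInter.1 hy (n + N)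
  refine closure_mono ?_ h1
  refine iUnion₂_subset fun m hm => ?_
  obtain ⟨k, rfl⟩ := Nat.exists_eq_add_of_le hm
  have h2 : f^[n + N + k] '' W ⊆ f^[n + k] '' V := by
    rw [show n + N + k = (n + k) + N by ring, Function.iterate_add, image_comp]
    exact image_mono hN
  exact h2.trans (subset_iUnion₂ (s := fun m _ => f^[m] '' V) (n + k) (Nat.le_add_right n k))

end AuxDyn

/-- Characterization of attracting neighborhoods of a given
attractor via its dual repeller. -/
theorem attractingNbhd_iff_disjoint_dual
    {X : Type*} [MetricSpace X] [CompactSpace X]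
    (f : X → X) (hf : Continuous f) (A : Set X) (hA : IsAttractor f A)
    (U : Set X) :
    (IsAttractingNbhd f U ∧ OmegaLim f U = A) ↔
      (A ⊆ interior U ∧ closure U ∩ DualRepeller f A = ∅) := by
  obtain ⟨V, htr, hAV⟩ := hA
  have hAomega : OmegaLim f V = A := by rw [omegaLim_trapping_eq hf htr, hAV]
  have hAinv : f '' A = A := by
    rw [← hAomega]
    exact subset_antisymm (image_omegaLim_subset hf) (subset_image_omegaLim hf)
  have hAintV : A ⊆ interior V := by
    rw [← hAomega]; exact omegaLim_trapping_subset_interior hf htr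
  constructor
  · rintro ⟨hnb, hωU⟩
    refine ⟨hωU ▸ hnb, ?_⟩
    rw [eq_empty_iff_forall_notMem]
    rintro x ⟨hxcl, hxdual⟩
    have hsub : OmegaLim f {x} ⊆ A :=
      ((omegaLim_mono (singleton_subset_iff.2 hxcl)).trans (omegaLim_closure hf)).trans hωU.subset
    obtain ⟨z, hz⟩ := omegaLim_nonempty (f := f) (singleton_nonempty x)
    have : (OmegaLim f {x} ∩ A).Nonempty := ⟨z, hz, hsub hz⟩
    exact nonempty_iff_ne_empty.1 this hxdual
  · rintro ⟨hAint, hdisj⟩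
    have hstep1 : ∀ x ∈ closure U, ∃ m : ℕ, f^[m] x ∈ interior V := by
      intro x hx
      have hxnd : x ∉ DualRepeller f A := fun hmem =>
        (eq_empty_iff_forall_notMem.1 hdisj x) ⟨hx, hmem⟩
      have hne : (OmegaLim f {x} ∩ A).Nonempty := nonempty_iff_ne_empty.2 hxnd
      obtain ⟨a, haω, haA⟩ := hne
      have h0 : a ∈ closure (Tl f {x} 0) := mem_iInter.1 haω 0
      obtain ⟨z, hzV, hzT⟩ := mem_closure_iff.1 h0 (interior V) isOpen_interior (hAintV haA)
      simp only [Tl, mem_iUnion, image_singleton, mem_singleton_iff, ge_iff_le,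
        Nat.zero_le, exists_prop, true_and] at hzT
      obtain ⟨m, -, rfl⟩ := hzT
      exact ⟨m, hzV⟩
    have hcover : closure U ⊆ ⋃ m : ℕ, f^[m] ⁻¹' (interior V) := by
      intro x hx
      obtain ⟨m, hm⟩ := hstep1 x hx
      exact mem_iUnion.2 ⟨m, hm⟩
    obtain ⟨t, ht⟩ := isClosed_closure.isCompact.elim_finite_subcover
      (fun m : ℕ => f^[m] ⁻¹' (interior V)) (fun m => isOpen_interior.preimage (hf.iterate m)) hcover
    set N := t.sup id with hNdef
    have hN : f^[N] '' closure U ⊆ V := by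
      rintro y ⟨x, hx, rfl⟩
      obtain ⟨m, hmt, hmx⟩ := mem_iUnion₂.1 (ht hx)
      have hmN : m ≤ N := Finset.le_sup (f := id) hmt
      have heq : f^[N] x = f^[N - m] (f^[m] x) := by
        rw [← Function.iterate_add_apply, Nat.sub_add_cancel hmN]
      rw [heq]
      exact iter_image_subset htr.1 (N - m) (mem_image_of_mem _ (interior_subset hmx))
    have hωsub : OmegaLim f U ⊆ A := by
      rw [← hAomega]
      exact (omegaLim_mono subset_closure).trans (omegaLim_subset_of_iterate N hN)
    have hωU : OmegaLim f U = A :=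
      subset_antisymm hωsub (invSet_subset_omegaLim (hAint.trans interior_subset) hAinv)
    exact ⟨by rw [IsAttractingNbhd, hωU]; exact hAint, hωU⟩
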